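/- arXiv:1610.03277 — 5 statements merged into one kernel-verified Lean document; each statement's English description precedes it below -/
import Mathlib

section
/- Let $R$ be a commutative ring and let $S \subseteq R[X,X^{-1}]$ be the multiplicative set of Laurent polynomials whose leading and trailing coefficients are units in $R$. Then the canonical ring homomorphism from the localization $S^{-1}R[X,X^{-1}]$ to the formal Laurent series ring $R((X)) = R[[X]][X^{-1}]$ (sending $P/Q$ to $P \cdot Q^{-1}$, where $Q^{-1}$ is the inverse of $Q$ in $R((X))$) is injective. -/
open Pointwise

/-- The Laurent polynomial ring `R[X,X⁻¹]`, realized as the subring of finite-support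
elements of the Laurent series ring `R((X))`. -/
noncomputable def LPsub (R : Type*) [CommRing R] : Subring (LaurentSeries R) where
  carrier := {f | f.support.Finite}
  zero_mem' := by simp [HahnSeries.support_zero]
  one_mem' := by
    have : (1 : LaurentSeries R) = HahnSeries.single 0 1 := by simp
    rw [Set.mem_setOf_eq, this]
    exact (Set.finite_singleton (0 : ℤ)).subset HahnSeries.support_single_subset
  add_mem' := fun ha hb => (ha.union hb).subset (HahnSeries.support_add_subset _ _)
  neg_mem' := fun ha => by simpa [HahnSeries.support_neg] using ha
  mul_mem' := fun ha hb => (ha.add hb).subset HahnSeries.support_mul_subset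

/-- `f` is a Laurent polynomial whose leading and trailing coefficients are units. -/
def UnitEnds {R : Type*} [CommRing R] (f : LaurentSeries R) : Prop :=
  ∃ m n : ℤ, (∀ k ∈ f.support, m ≤ k ∧ k ≤ n) ∧ IsUnit (f.coeff m) ∧ IsUnit (f.coeff n)

/-- The multiplicative set `S` of Laurent polynomials with unit leading and trailing
coefficients, as a submonoid of the Laurent polynomial ring. -/
noncomputable def Sunit (R : Type*) [CommRing R] : Submonoid (LPsub R) :=
  Submonoid.closure {P : LPsub R | UnitEnds (P : LaurentSeries R)}

set_option synthInstance.maxHeartbeats 1000000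
set_option maxHeartbeats 1000000

/-- The canonical ring homomorphism `S⁻¹R[X,X⁻¹] → R((X))` (i.e., any ring map from
the localization restricting to the inclusion on `R[X,X⁻¹]`, which necessarily sends
`P/Q` to `P·Q⁻¹`) is injective. -/
theorem localization_to_laurentSeries_injective
    (R : Type*) [CommRing R]
    (φ : Localization (Sunit R) →+* LaurentSeries R)
    (hφ : ∀ p : LPsub R,
      φ (algebraMap (LPsub R) (Localization (Sunit R)) p) = (p : LaurentSeries R)) :
    Function.Injective φ := by
  rw [injective_iff_map_eq_zero]
  intro a ha
  obtain ⟨⟨p, s⟩, rfl⟩ := IsLocalization.mk'_surjective (Sunit R) a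
  dsimp only at ha ⊢
  have h1 := IsLocalization.mk'_spec (Localization (Sunit R)) p s
  have h2 := congrArg φ h1
  rw [map_mul, ha, zero_mul, hφ p] at h2
  have hp : p = 0 := Subtype.ext h2.symm
  rw [hp, IsLocalization.mk'_zero]
end

section
/- Let $R$ be a commutative Noetherian ring, let $f \in R((X)) = R[[X]][X^{-1}]$, and let $M_f$ denote the $R[X,X^{-1}]$-submodule of $R((X))/R[X,X^{-1}]$ generated by the image of $f$. If $M_f$ is finitely generated as an $R$-module, then there exists a Laurent polynomial $Q \in R[X,X^{-1}]$ whose leading and trailing coefficients are units in $R$ such that $Qf \in R[X,X^{-1}]$, i.e. $f$ lies in the image of $S^{-1}R[X,X^{-1}]$ in $R((X))$. -/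
section Aux

open Submodule

/-- Over a Noetherian ring, if all terms of a sequence lie in a fixed finitely
generated submodule, then some term is an `R`-linear combination of the previous ones. -/
lemma exists_fin_rel {R V : Type*} [CommRing R] [IsNoetherianRing R] [AddCommGroup V]
    [Module R V] (N : Submodule R V) (hN : N.FG) (g : ℕ → V) (hg : ∀ n, g n ∈ N) :
    ∃ (k : ℕ) (c : Fin k → R), ∑ j, c j • g (j : ℕ) = g k := by
  classical
  set s : ℕ → Submodule R V := fun k => span R (Set.range fun j : Fin k => g j) with hs
  have hmono : ∀ {k l : ℕ}, k ≤ l → s k ≤ s l := by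
    intro k l hkl
    apply span_mono
    rintro x ⟨j, rfl⟩
    exact ⟨⟨j, lt_of_lt_of_le j.2 hkl⟩, rfl⟩
  have hT : (span R (Set.range g)).FG := by
    have h1 : span R (Set.range g) ≤ N := span_le.mpr (Set.range_subset_iff.mpr hg)
    haveI := isNoetherian_of_fg_of_noetherian N hN
    have h2 := IsNoetherian.noetherian ((span R (Set.range g)).comap N.subtype)
    have h3 := h2.map N.subtype
    rwa [Submodule.map_comap_subtype, inf_eq_right.mpr h1] at h3
  have hcomp := (Submodule.fg_iff_compact _).mp hT
  obtain ⟨t, ht⟩ := CompleteLattice.IsCompactElement.exists_finset_of_le_iSup _ hcomp s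
    (span_le.mpr (Set.range_subset_iff.mpr (fun n =>
      le_iSup s (n + 1) (subset_span ⟨⟨n, Nat.lt_succ_self n⟩, rfl⟩))))
  set K : ℕ := t.sup id with hK
  have hts : (⨆ i ∈ t, s i) ≤ s K := by
    refine iSup₂_le fun i hi => hmono ?_
    exact Finset.le_sup (f := id) hi
  have hgK : g K ∈ s K := hts (ht (subset_span ⟨K, rfl⟩))
  rw [hs] at hgK
  obtain ⟨c, hc⟩ := (mem_span_range_iff_exists_fun R).mp hgK
  exact ⟨K, c, hc⟩

end Aux

/-- Let `R` be Noetherian and `f ∈ R((X))`.  If the cyclic `R[X,X⁻¹]`-submodule `M_f`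
of `R((X))/R[X,X⁻¹]` generated by the class of `f` is finitely generated over `R`
(i.e. there are finitely many Laurent polynomials `P i` such that every `p·f`, for `p`
a Laurent polynomial, is congruent modulo Laurent polynomials to an `R`-linear
combination of the `P i · f`), then there is a Laurent polynomial `Q` with unit leading
and trailing coefficients such that `Q·f` is a Laurent polynomial, i.e. `f` lies in the
image of `S⁻¹R[X,X⁻¹]` in `R((X))`. -/
theorem rational_of_Mf_finite
    (R : Type*) [CommRing R] [IsNoetherianRing R] (f : LaurentSeries R)
    (h : ∃ (k : ℕ) (P : Fin k → LaurentSeries R), (∀ i, (P i).support.Finite) ∧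
      ∀ p : LaurentSeries R, p.support.Finite →
        ∃ (c : Fin k → R) (q : LaurentSeries R), q.support.Finite ∧
          p * f = (∑ i, c i • (P i * f)) + q) :
    ∃ Q : LaurentSeries R, Q.support.Finite ∧ UnitEnds Q ∧ (Q * f).support.Finite := by
  classical
  obtain ⟨k, P, hPfin, hP⟩ := h
  -- the submodule of finitely supported Laurent series (Laurent polynomials)
  set L : Submodule R (LaurentSeries R) :=
    { carrier := {x | x.support.Finite}
      add_mem' := fun {a b} ha hb => ((ha.union hb).subset (HahnSeries.support_add_subset _ _))
      zero_mem' := by simp [HahnSeries.support_zero]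
      smul_mem' := by
        intro r x hx
        refine hx.subset fun a ha => ?_
        intro h0
        exact ha (by simp [HahnSeries.coeff_smul, h0]) } with hL
  have memL : ∀ x : LaurentSeries R, x ∈ L ↔ x.support.Finite := fun x => Iff.rfl
  set π : LaurentSeries R →ₗ[R] (LaurentSeries R ⧸ L) := L.mkQ with hπ
  set N : Submodule R (LaurentSeries R ⧸ L) := Submodule.span R (Set.range fun i => π (P i * f)) with hN
  have hNfg : N.FG := Submodule.fg_span (Set.finite_range _)
  have key : ∀ t : ℤ, π (HahnSeries.single t 1 * f) ∈ N := by
    intro t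
    obtain ⟨c, q, hq, heq⟩ := hP (HahnSeries.single t 1)
      ((Set.finite_singleton t).subset HahnSeries.support_single_subset)
    have hq0 : π q = 0 := (Submodule.Quotient.mk_eq_zero L).mpr hq
    have : π (HahnSeries.single t 1 * f) = ∑ i, c i • π (P i * f) := by
      rw [heq, map_add, hq0, add_zero, map_sum]
      simp only [map_smul]
    rw [this]
    exact Submodule.sum_smul_mem N c fun i _ => Submodule.subset_span ⟨i, rfl⟩
  -- positive side
  obtain ⟨K, c, hc⟩ := exists_fin_rel N hNfg
    (fun n => π (HahnSeries.single ((n : ℤ) + 1) 1 * f)) (fun n => key _)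
  set χ : LaurentSeries R :=
    HahnSeries.single ((K : ℤ) + 1) 1 - ∑ j : Fin K, c j • HahnSeries.single ((j : ℤ) + 1) 1
    with hχ
  have hχf : (χ * f).support.Finite := by
    have hexp : χ * f = HahnSeries.single ((K : ℤ) + 1) 1 * f
        - ∑ j : Fin K, c j • (HahnSeries.single ((j : ℤ) + 1) 1 * f) := by
      rw [hχ, sub_mul, Finset.sum_mul]
      congr 1
      exact Finset.sum_congr rfl fun j _ => by
        rw [← HahnSeries.single_zero_mul_eq_smul, ← HahnSeries.single_zero_mul_eq_smul, mul_assoc]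
    have h0 : π (χ * f) = 0 := by
      rw [hexp, map_sub, map_sum]
      simp only [map_smul]
      rw [hc, sub_self]
    exact (Submodule.Quotient.mk_eq_zero L).mp h0
  -- negative side
  obtain ⟨M, b, hb⟩ := exists_fin_rel N hNfg
    (fun n => π (HahnSeries.single (-(n : ℤ) - 1) 1 * f)) (fun n => key _)
  set ψ : LaurentSeries R :=
    HahnSeries.single (-(M : ℤ) - 1) 1 - ∑ j : Fin M, b j • HahnSeries.single (-(j : ℤ) - 1) 1
    with hψ
  have hψf : (ψ * f).support.Finite := by
    have hexp : ψ * f = HahnSeries.single (-(M : ℤ) - 1) 1 * f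
        - ∑ j : Fin M, b j • (HahnSeries.single (-(j : ℤ) - 1) 1 * f) := by
      rw [hψ, sub_mul, Finset.sum_mul]
      congr 1
      exact Finset.sum_congr rfl fun j _ => by
        rw [← HahnSeries.single_zero_mul_eq_smul, ← HahnSeries.single_zero_mul_eq_smul, mul_assoc]
    have h0 : π (ψ * f) = 0 := by
      rw [hexp, map_sub, map_sum]
      simp only [map_smul]
      rw [hb, sub_self]
    exact (Submodule.Quotient.mk_eq_zero L).mp h0
  -- coefficients of χ
  have coeffχ : ∀ a : ℤ, χ.coeff a = (if a = (K : ℤ) + 1 then 1 else 0)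
      - ∑ j : Fin K, c j * (if a = (j : ℤ) + 1 then 1 else 0) := by
    intro a
    have hsum : (∑ j : Fin K, c j • HahnSeries.single ((j : ℤ) + 1) (1 : R)).coeff a
        = ∑ j : Fin K, c j * (if a = (j : ℤ) + 1 then 1 else 0) := by
      rw [show (∑ j : Fin K, c j • HahnSeries.single ((j : ℤ) + 1) (1 : R)).coeff a
          = (HahnSeries.coeff.linearMap (R := R) a)
            (∑ j : Fin K, c j • HahnSeries.single ((j : ℤ) + 1) (1 : R)) from rfl,
        map_sum]
      exact Finset.sum_congr rfl fun j _ => by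
        simp [HahnSeries.coeff_single, smul_eq_mul]
    rw [hχ, HahnSeries.coeff_sub, HahnSeries.coeff_single, hsum]
    split_ifs <;> rfl

  have coeffψ : ∀ a : ℤ, ψ.coeff a = (if a = -(M : ℤ) - 1 then 1 else 0)
      - ∑ j : Fin M, b j * (if a = -(j : ℤ) - 1 then 1 else 0) := by
    intro a
    have hsum : (∑ j : Fin M, b j • HahnSeries.single (-(j : ℤ) - 1) (1 : R)).coeff a
        = ∑ j : Fin M, b j * (if a = -(j : ℤ) - 1 then 1 else 0) := by
      rw [show (∑ j : Fin M, b j • HahnSeries.single (-(j : ℤ) - 1) (1 : R)).coeff a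
          = (HahnSeries.coeff.linearMap (R := R) a)
            (∑ j : Fin M, b j • HahnSeries.single (-(j : ℤ) - 1) (1 : R)) from rfl,
        map_sum]
      exact Finset.sum_congr rfl fun j _ => by
        simp [HahnSeries.coeff_single, smul_eq_mul]
    rw [hψ, HahnSeries.coeff_sub, HahnSeries.coeff_single, hsum]
    split_ifs <;> rfl

  have hχ_zero : ∀ a : ℤ, a < 1 ∨ (K : ℤ) + 1 < a → χ.coeff a = 0 := by
    intro a ha
    rw [coeffχ a]
    have h1 : a ≠ (K : ℤ) + 1 := by
      rcases ha with ha | ha <;> omega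
    have h2 : ∀ j : Fin K, a ≠ (j : ℤ) + 1 := by
      intro j
      have := j.2
      rcases ha with ha | ha <;> omega
    rw [if_neg h1]
    rw [Finset.sum_eq_zero fun j _ => by rw [if_neg (h2 j), mul_zero]]
    ring
  have hψ_zero : ∀ a : ℤ, a < -(M : ℤ) - 1 ∨ -1 < a → ψ.coeff a = 0 := by
    intro a ha
    rw [coeffψ a]
    have h1 : a ≠ -(M : ℤ) - 1 := by
      rcases ha with ha | ha <;> omega
    have h2 : ∀ j : Fin M, a ≠ -(j : ℤ) - 1 := by
      intro j
      have := j.2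
      rcases ha with ha | ha <;> omega
    rw [if_neg h1]
    rw [Finset.sum_eq_zero fun j _ => by rw [if_neg (h2 j), mul_zero]]
    ring
  have hχ_top : χ.coeff ((K : ℤ) + 1) = 1 := by
    rw [coeffχ]
    rw [if_pos rfl]
    rw [Finset.sum_eq_zero fun j _ => by
      rw [if_neg (by have := j.2; omega), mul_zero]]
    ring
  have hψ_bot : ψ.coeff (-(M : ℤ) - 1) = 1 := by
    rw [coeffψ]
    rw [if_pos rfl]
    rw [Finset.sum_eq_zero fun j _ => by
      rw [if_neg (by have := j.2; omega), mul_zero]]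
    ring
  refine ⟨χ + ψ, ?_, ?_, ?_⟩
  · -- finite support of Q
    refine Set.Finite.subset (Set.finite_Icc (-(M : ℤ) - 1) ((K : ℤ) + 1)) ?_
    intro a ha
    rw [HahnSeries.mem_support] at ha
    by_contra hmem
    rw [Set.mem_Icc, not_and_or] at hmem
    apply ha
    rw [HahnSeries.coeff_add]
    rcases hmem with hm | hm
    · push_neg at hm
      rw [hχ_zero a (Or.inl (by omega)), hψ_zero a (Or.inl (by omega)), add_zero]
    · push_neg at hm
      rw [hχ_zero a (Or.inr (by omega)), hψ_zero a (Or.inr (by omega)), add_zero]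
  · -- unit ends
    refine ⟨-(M : ℤ) - 1, (K : ℤ) + 1, ?_, ?_, ?_⟩
    · intro a ha
      rw [HahnSeries.mem_support] at ha
      by_contra hmem
      rw [not_and_or] at hmem
      apply ha
      rw [HahnSeries.coeff_add]
      rcases hmem with hm | hm
      · push_neg at hm
        rw [hχ_zero a (Or.inl (by omega)), hψ_zero a (Or.inl (by omega)), add_zero]
      · push_neg at hm
        rw [hχ_zero a (Or.inr (by omega)), hψ_zero a (Or.inr (by omega)), add_zero]
    · rw [HahnSeries.coeff_add, hψ_bot, hχ_zero _ (Or.inl (by omega)), zero_add]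
      exact isUnit_one
    · rw [HahnSeries.coeff_add, hχ_top, hψ_zero _ (Or.inr (by omega)), add_zero]
      exact isUnit_one
  · -- finite support of Q * f
    rw [add_mul]
    exact (hχf.union hψf).subset (HahnSeries.support_add_subset _ _)
end

section
/- Let $R$ be a commutative ring, let $f \in R((X)) = R[[X]][X^{-1}]$, and suppose there exists a Laurent polynomial $Q \in R[X,X^{-1}]$ with unit leading and trailing coefficients such that $Qf \in R[X,X^{-1}]$. Then the $R[X,X^{-1}]$-submodule $M_f$ of $R((X))/R[X,X^{-1}]$ generated by the image of $f$ is a finitely generated $R$-module; in fact, if $Q$ has degree span $d$ (difference between highest and lowest degrees), then $M_f$ is generated over $R$ by the images of $f, Xf, \dots, X^{d-1}f$. -/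
open HahnSeries

private lemma hs_coeff_sum {R : Type*} [CommRing R] {ι : Type*} (s : Finset ι)
    (g : ι → LaurentSeries R) (t : ℤ) :
    (∑ i ∈ s, g i).coeff t = ∑ i ∈ s, (g i).coeff t :=
  map_sum (coeff.addMonoidHom t) g s

private lemma hs_decomp {R : Type*} [CommRing R] (p : LaurentSeries R)
    (hp : p.support.Finite) :
    p = ∑ k ∈ hp.toFinset, HahnSeries.single k (p.coeff k) := by
  ext t
  rw [hs_coeff_sum]
  by_cases ht : t ∈ hp.toFinset
  · rw [Finset.sum_eq_single t (fun b _ hbt => coeff_single_of_ne (Ne.symm hbt))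
      (fun h => absurd ht h), coeff_single_same]
  · rw [Finset.sum_eq_zero (fun b hb => coeff_single_of_ne ?_)]
    · have : t ∉ p.support := fun h => ht (hp.mem_toFinset.mpr h)
      simpa [HahnSeries.mem_support] using this
    · rintro rfl; exact ht hb

private lemma hs_single_smul {R : Type*} [CommRing R] (a : ℤ) (r : R) :
    (HahnSeries.single a r : LaurentSeries R) = r • HahnSeries.single a 1 := by
  ext t
  rw [coeff_smul, coeff_single, coeff_single]
  split <;> simp

private lemma hs_smul_mul {R : Type*} [CommRing R] (r : R) (x y : LaurentSeries R) :
    (r • x) * y = r • (x * y) := by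
  rw [← single_zero_mul_eq_smul, ← single_zero_mul_eq_smul, mul_assoc]

private lemma hs_single_mul_support {R : Type*} [CommRing R] (j : ℤ) (x : LaurentSeries R)
    (hx : x.support.Finite) : ((HahnSeries.single j 1 : LaurentSeries R) * x).support.Finite := by
  apply Set.Finite.subset (hx.image (fun t => j + t))
  intro t ht
  rw [HahnSeries.mem_support] at ht
  refine ⟨t - j, ?_, by show j + (t - j) = t; omega⟩
  have h2 : ((HahnSeries.single j (1:R) : LaurentSeries R) * x).coeff ((t - j) + j) ≠ 0 := by
    rwa [show (t - j) + j = t by omega]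
  rw [coeff_single_mul_add, one_mul] at h2
  exact h2

/-- Suppose `Q` is a Laurent polynomial with support contained in `[m, n]` and whose
coefficients at `m` and `n` are units (so `Q` has unit trailing and leading
coefficients), and suppose `Q·f` is a Laurent polynomial.  Then the cyclic
`R[X,X⁻¹]`-submodule `M_f` of `R((X))/R[X,X⁻¹]` generated by the class of `f` is
generated as an `R`-module by the classes of `f, X·f, …, X^{d-1}·f` with
`d = n - m`: every `p·f` with `p` a Laurent polynomial is congruent, modulo Laurent
polynomials, to an `R`-linear combination of `X^i·f` for `0 ≤ i < d`.  In particular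
`M_f` is a finitely generated `R`-module. -/
theorem Mf_finite_of_rational
    (R : Type*) [CommRing R] (f Q : LaurentSeries R) (m n : ℤ)
    (hbd : ∀ k ∈ Q.support, m ≤ k ∧ k ≤ n)
    (hum : IsUnit (Q.coeff m)) (hun : IsUnit (Q.coeff n))
    (hQf : (Q * f).support.Finite) :
    ∀ p : LaurentSeries R, p.support.Finite →
      ∃ (c : Fin (n - m).toNat → R) (q : LaurentSeries R), q.support.Finite ∧
        p * f = (∑ i, c i • (HahnSeries.single (i : ℤ) (1 : R) * f)) + q := by
  classical
  by_cases hmn : m ≤ n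
  swap
  · -- degenerate: Q.coeff m = 0 is a unit, so R is trivial
    have h0 : Q.coeff m = 0 := by
      by_contra h
      exact hmn (le_trans (hbd m h).1 (hbd m h).2)
    rw [h0, isUnit_zero_iff] at hum
    have : Subsingleton R := subsingleton_of_zero_eq_one hum
    intro p _
    exact ⟨0, 0, by simp [HahnSeries.support_zero], Subsingleton.elim _ _⟩
  -- main case
  have hdn : ((n - m).toNat : ℤ) = n - m := Int.toNat_of_nonneg (by omega)
  set d : ℕ := (n - m).toNat with hd
  -- Q is a Laurent polynomial supported on Icc m n
  have hQfin : Q.support.Finite := Set.Finite.subset (Set.finite_Icc m n)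
    (fun k hk => Set.mem_Icc.mpr (hbd k hk))
  have hQrep : Q = ∑ k ∈ Finset.Icc m n, HahnSeries.single k (Q.coeff k) := by
    nth_rewrite 1 [hs_decomp Q hQfin]
    apply Finset.sum_subset
    · intro k hk
      rw [hQfin.mem_toFinset] at hk
      exact Finset.mem_Icc.mpr (hbd k hk)
    · intro k _ hk
      rw [hQfin.mem_toFinset, HahnSeries.mem_support, not_not] at hk
      rw [hk, single_eq_zero]
  -- the submodule of finitely supported series
  let F : Submodule R (LaurentSeries R) :=
  { carrier := {x | x.support.Finite}
    add_mem' := fun hx hy => ((hx.union hy).subset (support_add_subset _ _))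
    zero_mem' := by simp [HahnSeries.support_zero]
    smul_mem' := by
      intro r x hx
      apply hx.subset
      intro t ht
      rw [HahnSeries.mem_support, coeff_smul] at ht
      intro h
      rw [h, smul_zero] at ht
      exact ht rfl }
  let v : Fin d → LaurentSeries R := fun i => HahnSeries.single (i : ℤ) (1 : R) * f
  let N : Submodule R (LaurentSeries R) := F ⊔ Submodule.span R (Set.range v)
  -- key relation
  have hrel : ∀ j : ℤ,
      (∑ k ∈ Finset.Icc m n, Q.coeff k • (HahnSeries.single (j + k) (1:R) * f)) ∈ F := by
    intro j
    have : (∑ k ∈ Finset.Icc m n, Q.coeff k • (HahnSeries.single (j + k) (1:R) * f))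
        = HahnSeries.single j 1 * (Q * f) := by
      rw [← mul_assoc]
      nth_rewrite 2 [hQrep]
      rw [Finset.mul_sum, Finset.sum_mul]
      apply Finset.sum_congr rfl
      intro k _
      rw [single_mul_single, hs_single_smul (j + k) (1 * Q.coeff k), hs_smul_mul, one_mul]
    rw [this]
    exact hs_single_mul_support j _ hQf
  -- base membership
  have base : ∀ j : ℤ, 0 ≤ j → j < (d : ℤ) → HahnSeries.single j (1:R) * f ∈ N := by
    intro j h0 hjd
    have h1 : j.toNat < d := by omega
    have h2 : HahnSeries.single j (1:R) * f = v ⟨j.toNat, h1⟩ := by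
      simp only [v]
      congr 1
      simp [Int.toNat_of_nonneg h0]
    rw [h2]
    exact Submodule.mem_sup_right (Submodule.subset_span ⟨_, rfl⟩)
  -- upward induction
  have up : ∀ (K : ℕ), ∀ j : ℤ, 0 ≤ j → j < (K : ℤ) → HahnSeries.single j (1:R) * f ∈ N := by
    intro K
    induction K with
    | zero => intro j h0 hK; omega
    | succ K ih =>
      intro j h0 hK
      by_cases hjd : j < (d : ℤ)
      · exact base j h0 hjd
      push_neg at hjd
      have hj : j < (K : ℤ) + 1 := by exact_mod_cast hK
      -- use relation at j - n
      have h1 := hrel (j - n)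
      have hsplit : Finset.Icc m n = insert n (Finset.Icc m (n - 1)) := by
        ext k; simp [Finset.mem_Icc]; omega
      rw [hsplit, Finset.sum_insert (by simp [Finset.mem_Icc])] at h1
      have hjn : j - n + n = j := by omega
      rw [hjn] at h1
      have hrest : (∑ k ∈ Finset.Icc m (n-1),
          Q.coeff k • (HahnSeries.single (j - n + k) (1:R) * f)) ∈ N := by
        apply Submodule.sum_mem
        intro k hk
        rw [Finset.mem_Icc] at hk
        apply Submodule.smul_mem
        apply ih
        · omega
        · omega
      have hQn : Q.coeff n • (HahnSeries.single j (1:R) * f) ∈ N := by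
        have := Submodule.sub_mem N (Submodule.mem_sup_left h1) hrest
        simpa using this
      obtain ⟨u, hu⟩ := hun
      have : HahnSeries.single j (1:R) * f
          = (↑u⁻¹ : R) • (Q.coeff n • (HahnSeries.single j (1:R) * f)) := by
        rw [smul_smul, ← hu, Units.inv_mul, one_smul]
      rw [this]
      exact Submodule.smul_mem N _ hQn
  have upAll : ∀ j : ℤ, 0 ≤ j → HahnSeries.single j (1:R) * f ∈ N := by
    intro j h0
    exact up (j.toNat + 1) j h0 (by omega)
  -- downward induction
  have down : ∀ (K : ℕ), ∀ j : ℤ, -(K : ℤ) ≤ j → HahnSeries.single j (1:R) * f ∈ N := by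
    intro K
    induction K with
    | zero => intro j h0; exact upAll j (by omega)
    | succ K ih =>
      intro j h0
      by_cases hK : -(K : ℤ) ≤ j
      · exact ih j hK
      push_neg at hK
      have hj : j = -(K : ℤ) - 1 := by omega
      have h1 := hrel (j - m)
      have hsplit : Finset.Icc m n = insert m (Finset.Icc (m + 1) n) := by
        ext k; simp [Finset.mem_Icc]; omega
      rw [hsplit, Finset.sum_insert (by simp [Finset.mem_Icc])] at h1
      have hjm : j - m + m = j := by omega
      rw [hjm] at h1
      have hrest : (∑ k ∈ Finset.Icc (m+1) n,
          Q.coeff k • (HahnSeries.single (j - m + k) (1:R) * f)) ∈ N := by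
        apply Submodule.sum_mem
        intro k hk
        rw [Finset.mem_Icc] at hk
        apply Submodule.smul_mem
        apply ih
        omega
      have hQm : Q.coeff m • (HahnSeries.single j (1:R) * f) ∈ N := by
        have := Submodule.sub_mem N (Submodule.mem_sup_left h1) hrest
        simpa using this
      obtain ⟨u, hu⟩ := hum
      have : HahnSeries.single j (1:R) * f
          = (↑u⁻¹ : R) • (Q.coeff m • (HahnSeries.single j (1:R) * f)) := by
        rw [smul_smul, ← hu, Units.inv_mul, one_smul]
      rw [this]
      exact Submodule.smul_mem N _ hQm
  have key : ∀ j : ℤ, HahnSeries.single j (1:R) * f ∈ N := by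
    intro j
    exact down (-j).toNat j (by omega)
  -- conclude
  intro p hp
  have hmem : p * f ∈ N := by
    have hp1 : p * f = ∑ k ∈ hp.toFinset, p.coeff k • (HahnSeries.single k (1:R) * f) := by
      nth_rewrite 1 [hs_decomp p hp]
      rw [Finset.sum_mul]
      apply Finset.sum_congr rfl
      intro k _
      rw [hs_single_smul k (p.coeff k), hs_smul_mul]
    rw [hp1]
    exact Submodule.sum_mem N (fun k _ => Submodule.smul_mem N _ (key k))
  obtain ⟨y, hy, z, hz, hyz⟩ := Submodule.mem_sup.mp hmem
  rw [Submodule.mem_span_range_iff_exists_fun] at hz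
  obtain ⟨c, hc⟩ := hz
  exact ⟨c, y, hy, by rw [← hyz, ← hc]; exact (add_comm y _)⟩
end

section
/- Let $R$ be a commutative Noetherian ring and $R' \subseteq R$ a Noetherian subring such that $R$ is finitely generated as an $R'$-module. Let $f \in R((X))$ be a formal Laurent series such that (a) all coefficients of $f$ lie in $R'$, and (b) there exists $Q \in R[X,X^{-1}]$ with unit leading and trailing coefficients in $R$ such that $Qf \in R[X,X^{-1}]$. Then there exists $Q' \in R'[X,X^{-1}]$ whose leading and trailing coefficients are units in $R'$ such that $Q'f \in R'[X,X^{-1}]$. In other words, $(S')^{-1}R'[X,X^{-1}]$ equals the intersection in $R((X))$ of $R'((X))$ and $S^{-1}R[X,X^{-1}]$. -/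
namespace RationalDescend

open HahnSeries Finset

variable {R : Type*} [CommRing R]

/-- Submodule of finitely supported functions `ℤ → R`. -/
def finSupp (R : Type*) [CommRing R] : Submodule R (ℤ → R) where
  carrier := {u | (Function.support u).Finite}
  add_mem' := fun ha hb => ((ha.union hb).subset (Function.support_add _ _))
  zero_mem' := by simp [Function.support_zero]
  smul_mem' := by
    intro c u hu
    refine hu.subset fun i hi => ?_
    simp only [Function.mem_support, Pi.smul_apply, smul_eq_mul] at hi ⊢
    exact fun h => hi (by rw [h, mul_zero])

lemma mem_finSupp {u : ℤ → R} : u ∈ finSupp R ↔ (Function.support u).Finite := Iff.rfl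

/-- Shift equivalence on functions. -/
def shiftE (R : Type*) [CommRing R] : (ℤ → R) ≃ₗ[R] (ℤ → R) where
  toFun u := fun i => u (i + 1)
  map_add' := fun _ _ => rfl
  map_smul' := fun _ _ => rfl
  invFun u := fun i => u (i - 1)
  left_inv := fun u => funext fun i => by simp
  right_inv := fun u => funext fun i => by simp

lemma shiftE_mem_finSupp {u : ℤ → R} (hu : u ∈ finSupp R) : shiftE R u ∈ finSupp R := by
  rw [mem_finSupp] at hu ⊢
  have : Function.support (shiftE R u) = (fun i : ℤ => i + 1) ⁻¹' Function.support u := rfl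
  rw [this]
  exact hu.preimage (fun x _ y _ h => by omega)

lemma shiftE_map_finSupp : (finSupp R).map ((shiftE R : (ℤ → R) →ₗ[R] (ℤ → R))) = finSupp R := by
  apply le_antisymm
  · rintro _ ⟨u, hu, rfl⟩; exact shiftE_mem_finSupp hu
  · intro u hu
    refine ⟨(shiftE R).symm u, ?_, (shiftE R).apply_symm_apply u⟩
    rw [mem_finSupp] at hu
    show (Function.support ((shiftE R).symm u)).Finite
    have : Function.support ((shiftE R).symm u) = (fun i : ℤ => i - 1) ⁻¹' Function.support u := rfl
    rw [this]
    exact hu.preimage (fun x _ y _ h => by omega)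

/-- Quotient of all functions by finitely supported ones. -/
abbrev V (R : Type*) [CommRing R] := (ℤ → R) ⧸ finSupp R

/-- The shift on the quotient. -/
def sigma (R : Type*) [CommRing R] : V R ≃ₗ[R] V R :=
  Submodule.Quotient.equiv (finSupp R) (finSupp R) (shiftE R) shiftE_map_finSupp

/-- Class of the `k`-shifted coefficient sequence of `f`. -/
def g (f : LaurentSeries R) (k : ℤ) : V R := (finSupp R).mkQ (fun i => f.coeff (i + k))

lemma sigma_g (f : LaurentSeries R) (k : ℤ) : sigma R (g f k) = g f (k + 1) := by
  show sigma R (Submodule.Quotient.mk _) = _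
  unfold sigma
  rw [Submodule.Quotient.equiv_apply]
  show Submodule.Quotient.mk _ = Submodule.Quotient.mk _
  congr 1
  funext i
  show f.coeff ((i + 1) + k) = f.coeff (i + (k + 1))
  congr 1
  omega


lemma coeff_sum {ι : Type*} (s : Finset ι) (F : ι → HahnSeries ℤ R) (t : ℤ) :
    (∑ i ∈ s, F i).coeff t = ∑ i ∈ s, (F i).coeff t := by
  classical
  induction s using Finset.induction with
  | empty => simp
  | insert a s h ih => rw [Finset.sum_insert h, Finset.sum_insert h, HahnSeries.coeff_add, ih]

lemma eq_sum_single (Q : HahnSeries ℤ R) (s : Finset ℤ) (hs : Q.support ⊆ ↑s) :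
    Q = ∑ j ∈ s, HahnSeries.single j (Q.coeff j) := by
  classical
  ext t
  rw [coeff_sum]
  by_cases ht : t ∈ s
  · rw [Finset.sum_eq_single t (fun j _ hj => by simp [coeff_single, hj.symm])
      (fun h => absurd ht h)]
    simp [coeff_single]
  · rw [Finset.sum_eq_zero (fun j hj => by
      simp only [coeff_single]
      split
      · next h => exact absurd (h ▸ hj) ht
      · rfl)]
    by_contra h
    exact ht (hs h)

lemma finite_mul_coeff (Q f : HahnSeries ℤ R) (s : Finset ℤ) (hs : Q.support ⊆ ↑s) (x : ℤ) :
    (Q * f).coeff x = ∑ j ∈ s, Q.coeff j * f.coeff (x - j) := by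
  conv_lhs => rw [eq_sum_single Q s hs]
  rw [Finset.sum_mul, coeff_sum]
  refine Finset.sum_congr rfl fun j _ => ?_
  have := HahnSeries.coeff_single_mul_add (r := Q.coeff j) (x := f) (a := x - j) (b := j)
  rwa [sub_add_cancel] at this

lemma single_one_mul_coeff {x : HahnSeries ℤ R} {s k : ℤ} :
    (HahnSeries.single s (1 : R) * x).coeff k = x.coeff (k - s) := by
  have := HahnSeries.coeff_single_mul_add (r := (1 : R)) (x := x) (a := k - s) (b := s)
  rwa [sub_add_cancel, one_mul] at this


/-- Laurent polynomial with coefficients `c j` at `-j`, for `j = 0, ..., E`. -/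
noncomputable def Qc (E : ℕ) (c : ℕ → R) : HahnSeries ℤ R :=
  ∑ j ∈ Finset.range (E + 1), HahnSeries.single (-(j : ℤ)) (c j)

lemma Qc_coeff_neg {E : ℕ} {c : ℕ → R} {j : ℕ} (hj : j ≤ E) :
    (Qc E c).coeff (-(j : ℤ)) = c j := by
  classical
  unfold Qc
  rw [coeff_sum, Finset.sum_eq_single j (fun i _ hi =>
      HahnSeries.coeff_single_of_ne (fun h => hi (by omega)))
    (fun h => absurd (Finset.mem_range.2 (by omega)) h)]
  exact HahnSeries.coeff_single_same _ _

lemma Qc_coeff_eq_zero {E : ℕ} {c : ℕ → R} {t : ℤ} (ht : t < -(E : ℤ) ∨ 0 < t) :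
    (Qc E c).coeff t = 0 := by
  classical
  unfold Qc
  rw [coeff_sum]
  refine Finset.sum_eq_zero fun j hj => ?_
  rw [Finset.mem_range] at hj
  exact HahnSeries.coeff_single_of_ne (fun h => by subst h; omega)

lemma Qc_coeff_mem {E : ℕ} {c : ℕ → R} (R' : Subring R) (hc : ∀ j, c j ∈ R') (t : ℤ) :
    (Qc E c).coeff t ∈ R' := by
  classical
  unfold Qc
  rw [coeff_sum]
  refine Subring.sum_mem _ fun j _ => ?_
  rw [HahnSeries.coeff_single]
  split
  · exact hc j
  · exact R'.zero_mem

lemma Qc_mul_coeff {E : ℕ} {c : ℕ → R} (f : LaurentSeries R) (i : ℤ) :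
    (Qc E c * f).coeff i = ∑ j ∈ Finset.range (E + 1), c j * f.coeff (i + j) := by
  unfold Qc
  rw [Finset.sum_mul, coeff_sum]
  refine Finset.sum_congr rfl fun j _ => ?_
  have := HahnSeries.coeff_single_mul_add (r := c j) (x := f) (a := i + j) (b := -(j : ℤ))
  rwa [show i + (j : ℤ) + -(j : ℤ) = i by omega] at this


lemma mk_relation (f : LaurentSeries R) (E : ℕ) (c : ℕ → R)
    (h : ∑ j ∈ Finset.range (E + 1), c j • g f (j : ℤ) = 0) :
    (Function.support fun i : ℤ => ∑ j ∈ Finset.range (E + 1), c j * f.coeff (i + j)).Finite := by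
  have h2 : (finSupp R).mkQ (∑ j ∈ Finset.range (E + 1),
      c j • fun i : ℤ => f.coeff (i + (j : ℤ))) = 0 := by
    rw [map_sum]
    simp only [map_smul]
    exact h
  rw [Submodule.mkQ_apply, Submodule.Quotient.mk_eq_zero, mem_finSupp] at h2
  have : (fun i : ℤ => ∑ j ∈ Finset.range (E + 1), c j * f.coeff (i + j)) =
      (∑ j ∈ Finset.range (E + 1), c j • fun i : ℤ => f.coeff (i + (j : ℤ))) := by
    funext i
    rw [Finset.sum_apply]
    simp [smul_eq_mul]
  rw [this]
  exact h2

lemma exists_Q' (R' : Subring R) (f : LaurentSeries R) (hf : ∀ i : ℤ, f.coeff i ∈ R')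
    (E1 : ℕ) (a : ℕ → R) (haR : ∀ j, a j ∈ R') (haT : a E1 = 1)
    (hafin : (Function.support fun i : ℤ =>
      ∑ j ∈ Finset.range (E1 + 1), a j * f.coeff (i + j)).Finite)
    (E2 : ℕ) (b : ℕ → R) (hbR : ∀ j, b j ∈ R') (hbT : b 0 = 1)
    (hbfin : (Function.support fun i : ℤ =>
      ∑ j ∈ Finset.range (E2 + 1), b j * f.coeff (i + j)).Finite) :
    ∃ (Q' : LaurentSeries R) (m' n' : ℤ),
      Q'.support.Finite ∧ (∀ i : ℤ, Q'.coeff i ∈ R') ∧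
      (∀ k ∈ Q'.support, m' ≤ k ∧ k ≤ n') ∧
      (∃ u ∈ R', Q'.coeff m' * u = 1) ∧ (∃ v ∈ R', Q'.coeff n' * v = 1) ∧
      (Q' * f).support.Finite ∧ (∀ i : ℤ, (Q' * f).coeff i ∈ R') := by
  set s : ℤ := -((E2 : ℤ) + 1) with hs
  set m' : ℤ := s - E1 with hm'
  refine ⟨Qc E2 b + HahnSeries.single s 1 * Qc E1 a, m', 0, ?_⟩
  have hcoeff : ∀ t : ℤ, (Qc E2 b + HahnSeries.single s 1 * Qc E1 a).coeff t =
      (Qc E2 b).coeff t + (Qc E1 a).coeff (t - s) := fun t => by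
    rw [HahnSeries.coeff_add, single_one_mul_coeff]
  have hsupp : ∀ k ∈ (Qc E2 b + HahnSeries.single s 1 * Qc E1 a).support, m' ≤ k ∧ k ≤ 0 := by
    intro k hk
    by_contra hcon
    have h1 : (Qc E2 b).coeff k = 0 := Qc_coeff_eq_zero (by omega)
    have h2 : (Qc E1 a).coeff (k - s) = 0 := Qc_coeff_eq_zero (by omega)
    exact hk (by rw [hcoeff, h1, h2, add_zero])
  have hc0 : (Qc E2 b + HahnSeries.single s 1 * Qc E1 a).coeff 0 = 1 := by
    rw [hcoeff, Qc_coeff_eq_zero (t := 0 - s) (by omega), add_zero]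
    have := Qc_coeff_neg (c := b) (E := E2) (Nat.zero_le E2)
    simpa [hbT] using this
  have hcm : (Qc E2 b + HahnSeries.single s 1 * Qc E1 a).coeff m' = 1 := by
    rw [hcoeff, Qc_coeff_eq_zero (t := m') (by omega), zero_add,
      show m' - s = -(E1 : ℤ) by omega, Qc_coeff_neg le_rfl, haT]
  have hmulc : ∀ i : ℤ, ((Qc E2 b + HahnSeries.single s 1 * Qc E1 a) * f).coeff i =
      (Qc E2 b * f).coeff i + (Qc E1 a * f).coeff (i - s) := fun i => by
    rw [add_mul, mul_assoc, HahnSeries.coeff_add, single_one_mul_coeff]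
  have hAfin : (Qc E1 a * f).support.Finite := by
    have : (Qc E1 a * f).support = (Function.support fun i : ℤ =>
        ∑ j ∈ Finset.range (E1 + 1), a j * f.coeff (i + j)) := by
      ext i; simp only [HahnSeries.mem_support, Function.mem_support, Qc_mul_coeff]
    rw [this]; exact hafin
  have hBfin : (Qc E2 b * f).support.Finite := by
    have : (Qc E2 b * f).support = (Function.support fun i : ℤ =>
        ∑ j ∈ Finset.range (E2 + 1), b j * f.coeff (i + j)) := by
      ext i; simp only [HahnSeries.mem_support, Function.mem_support, Qc_mul_coeff]
    rw [this]; exact hbfin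
  refine ⟨?_, ?_, hsupp, ⟨1, R'.one_mem, by rw [hcm, one_mul]⟩,
    ⟨1, R'.one_mem, by rw [hc0, one_mul]⟩, ?_, ?_⟩
  · exact (Set.finite_Icc m' 0).subset fun k hk => Set.mem_Icc.2 (hsupp k hk)
  · intro t
    rw [hcoeff]
    exact R'.add_mem (Qc_coeff_mem R' hbR t) (Qc_coeff_mem R' haR _)
  · refine (hBfin.union (hAfin.preimage (f := fun i : ℤ => i - s)
      (fun x _ y _ h => by simpa using h))).subset ?_
    intro i hi
    rw [HahnSeries.mem_support, hmulc] at hi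
    by_contra hcon
    simp only [Set.mem_union, Set.mem_preimage, HahnSeries.mem_support, not_or, not_not] at hcon
    exact hi (by rw [hcon.1, hcon.2, add_zero])
  · intro i
    rw [hmulc]
    refine R'.add_mem ?_ ?_ <;>
      rw [Qc_mul_coeff] <;>
      exact R'.sum_mem fun j _ => R'.mul_mem (by first | exact hbR j | exact haR j) (hf _)

end RationalDescend

set_option maxHeartbeats 1600000 in
set_option synthInstance.maxHeartbeats 400000 in
open RationalDescend in
/-- Let `R` be Noetherian, `R' ⊆ R` a Noetherian subring with `R` finitely generated
as an `R'`-module.  Let `f ∈ R((X))` have all coefficients in `R'`, and suppose there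
is a Laurent polynomial `Q` over `R` with unit leading and trailing coefficients such
that `Q·f` is a Laurent polynomial.  Then there is a Laurent polynomial `Q'` with
coefficients in `R'`, whose leading and trailing coefficients are units *of `R'`*,
such that `Q'·f` is a Laurent polynomial with coefficients in `R'`.  (That is,
`(S')⁻¹R'[X,X⁻¹] = R'((X)) ∩ S⁻¹R[X,X⁻¹]` inside `R((X))`.) -/
theorem rational_descends_to_subring
    (R : Type*) [CommRing R] [IsNoetherianRing R] (R' : Subring R)
    [IsNoetherianRing R'] [Module.Finite R' R]
    (f : LaurentSeries R) (hf : ∀ i : ℤ, f.coeff i ∈ R')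
    (Q : LaurentSeries R) (hQfin : Q.support.Finite)
    (m n : ℤ) (hbd : ∀ k ∈ Q.support, m ≤ k ∧ k ≤ n)
    (hum : IsUnit (Q.coeff m)) (hun : IsUnit (Q.coeff n))
    (hQf : (Q * f).support.Finite) :
    ∃ (Q' : LaurentSeries R) (m' n' : ℤ),
      Q'.support.Finite ∧ (∀ i : ℤ, Q'.coeff i ∈ R') ∧
      (∀ k ∈ Q'.support, m' ≤ k ∧ k ≤ n') ∧
      (∃ u ∈ R', Q'.coeff m' * u = 1) ∧ (∃ v ∈ R', Q'.coeff n' * v = 1) ∧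
      (Q' * f).support.Finite ∧ (∀ i : ℤ, (Q' * f).coeff i ∈ R') := by
  classical
  by_cases hmn : m ≤ n
  swap
  · -- degenerate case: `R` is the zero ring
    have hQm : Q.coeff m = 0 := by
      by_contra h
      exact hmn (hbd m h).2
    have h01 : (0 : R) = 1 := isUnit_zero_iff.mp (hQm ▸ hum)
    haveI : Subsingleton R := subsingleton_of_zero_eq_one h01
    refine ⟨0, 0, 0, ?_, ?_, ?_, ⟨0, R'.zero_mem, Subsingleton.elim _ _⟩,
      ⟨0, R'.zero_mem, Subsingleton.elim _ _⟩, ?_, ?_⟩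
    · simp [HahnSeries.support_zero]
    · intro i
      simp only [HahnSeries.coeff_zero]
      exact R'.zero_mem
    · intro k hk; simp at hk
    · simp [HahnSeries.support_zero]
    · intro i
      simp only [zero_mul, HahnSeries.coeff_zero]
      exact R'.zero_mem
  -- main case
  have hQsub : Q.support ⊆ ↑(Finset.Icc m n) := fun k hk =>
    Finset.mem_coe.2 (Finset.mem_Icc.2 ⟨(hbd k hk).1, (hbd k hk).2⟩)
  -- the basic linear relation among shifted tails
  have hrel : ∀ t : ℤ, ∑ j ∈ Finset.Icc m n, Q.coeff j • g f (t - j) = 0 := by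
    intro t
    have heq : (∑ j ∈ Finset.Icc m n, Q.coeff j • (fun i : ℤ => f.coeff (i + (t - j))))
        = fun i : ℤ => (Q * f).coeff (i + t) := by
      funext i
      rw [Finset.sum_apply, finite_mul_coeff Q f (Finset.Icc m n) hQsub (i + t)]
      refine Finset.sum_congr rfl fun j _ => ?_
      simp only [Pi.smul_apply, smul_eq_mul]
      congr 2
      omega
    calc ∑ j ∈ Finset.Icc m n, Q.coeff j • g f (t - j)
        = (finSupp R).mkQ (∑ j ∈ Finset.Icc m n,
            Q.coeff j • (fun i : ℤ => f.coeff (i + (t - j)))) := by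
          rw [map_sum]
          exact Finset.sum_congr rfl fun j _ => by rw [map_smul]; rfl
      _ = 0 := by
          rw [heq, Submodule.mkQ_apply, Submodule.Quotient.mk_eq_zero, mem_finSupp]
          have : Function.support (fun i : ℤ => (Q * f).coeff (i + t))
              = (fun i : ℤ => i + t) ⁻¹' (Q * f).support := rfl
          rw [this]
          exact hQf.preimage fun x _ y _ h => by omega
  have up_step : ∀ (K : ℤ) (T : Submodule R (V R)),
      (∀ x : ℤ, K - (n - m) ≤ x → x ≤ K - 1 → g f x ∈ T) → g f K ∈ T := by
    intro K T hT
    have h0 := hrel (K + m)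
    rw [← Finset.add_sum_erase _ _ (Finset.mem_Icc.2 ⟨le_refl m, hmn⟩),
      show K + m - m = K by omega] at h0
    have hmem : Q.coeff m • g f K ∈ T := by
      rw [eq_neg_of_add_eq_zero_left h0]
      refine T.neg_mem (Submodule.sum_mem T fun j hj => Submodule.smul_mem T _ ?_)
      rw [Finset.Icc_erase_left, Finset.mem_Ioc] at hj
      exact hT _ (by omega) (by omega)
    have hGK : g f K = (↑hum.unit⁻¹ : R) • (Q.coeff m • g f K) := by
      rw [smul_smul, hum.val_inv_mul, one_smul]
    rw [hGK]
    exact Submodule.smul_mem T _ hmem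
  have down_step : ∀ (K : ℤ) (T : Submodule R (V R)),
      (∀ x : ℤ, K + 1 ≤ x → x ≤ K + (n - m) → g f x ∈ T) → g f K ∈ T := by
    intro K T hT
    have h0 := hrel (K + n)
    rw [← Finset.add_sum_erase _ _ (Finset.mem_Icc.2 ⟨hmn, le_refl n⟩),
      show K + n - n = K by omega] at h0
    have hmem : Q.coeff n • g f K ∈ T := by
      rw [eq_neg_of_add_eq_zero_left h0]
      refine T.neg_mem (Submodule.sum_mem T fun j hj => Submodule.smul_mem T _ ?_)
      rw [Finset.Icc_erase_right, Finset.mem_Ico] at hj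
      exact hT _ (by omega) (by omega)
    have hGK : g f K = (↑hun.unit⁻¹ : R) • (Q.coeff n • g f K) := by
      rw [smul_smul, hun.val_inv_mul, one_smul]
    rw [hGK]
    exact Submodule.smul_mem T _ hmem
  set T : Submodule R (V R) := Submodule.span R ((g f) '' (Set.Icc 0 (n - m - 1))) with hT
  have up : ∀ (c : ℕ) (k : ℤ), 0 ≤ k → k ≤ (n - m - 1) + c → g f k ∈ T := by
    intro c
    induction c with
    | zero =>
      intro k h0 h1
      exact Submodule.subset_span ⟨k, Set.mem_Icc.2 ⟨h0, by omega⟩, rfl⟩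
    | succ c ih =>
      intro k h0 h1
      by_cases hc : k ≤ n - m - 1 + c
      · exact ih k h0 hc
      · exact up_step k T fun x hx1 hx2 => ih x (by omega) (by omega)
  have down : ∀ (c : ℕ) (k : ℤ), -(c : ℤ) ≤ k → k ≤ n - m - 1 → g f k ∈ T := by
    intro c
    induction c with
    | zero =>
      intro k h0 h1
      exact Submodule.subset_span ⟨k, Set.mem_Icc.2 ⟨by omega, h1⟩, rfl⟩
    | succ c ih =>
      intro k h0 h1
      by_cases hc : -(c : ℤ) ≤ k
      · exact ih k hc h1
      · exact down_step k T fun x hx1 hx2 => ih x (by omega) (by omega)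
  have hall : ∀ k : ℤ, g f k ∈ T := by
    intro k
    rcases le_or_gt 0 k with h | h
    · exact up (k - (n - m - 1)).toNat k h
        (by have := Int.self_le_toNat (k - (n - m - 1)); omega)
    · exact down (-k).toNat k (by have := Int.self_le_toNat (-k); omega) (by omega)
  have hTfg : T.FG := Submodule.fg_def.2 ⟨_, (Set.finite_Icc (0 : ℤ) (n - m - 1)).image _, rfl⟩
  haveI hTfin : Module.Finite R ↥T := Module.Finite.iff_fg.2 hTfg
  haveI hTfin' : Module.Finite R' ↥T := Module.Finite.trans R ↥T
  haveI hTnoeth : IsNoetherian R' ↥T := isNoetherian_of_isNoetherianRing_of_finite R' ↥T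
  set N : Submodule R' (V R) := Submodule.span R' (Set.range (g f)) with hN
  have hgN : ∀ k : ℤ, g f k ∈ N := fun k => Submodule.subset_span ⟨k, rfl⟩
  have hNle : N ≤ T.restrictScalars R' := Submodule.span_le.2 (by rintro _ ⟨k, rfl⟩; exact hall k)
  have hNfg : N.FG := by
    haveI : IsNoetherian R' ↥(T.restrictScalars R') := hTnoeth
    have h1 : (N.comap (T.restrictScalars R').subtype).FG := IsNoetherian.noetherian _
    have h2 := h1.map (T.restrictScalars R').subtype
    rwa [Submodule.map_comap_subtype, inf_eq_right.2 hNle] at h2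
  set s' : V R ≃ₗ[R'] V R := (sigma R).restrictScalars R' with hs'
  have hs'g : ∀ k : ℤ, s' (g f k) = g f (k + 1) := fun k => sigma_g f k
  have hs'gs : ∀ k : ℤ, s'.symm (g f k) = g f (k - 1) := by
    intro k
    have h1 := hs'g (k - 1)
    rw [show k - 1 + 1 = k by omega] at h1
    rw [← h1, LinearEquiv.symm_apply_apply]
  have heqN : Submodule.map (s' : V R →ₗ[R'] V R) N = N := by
    rw [hN, Submodule.map_span]
    congr 1
    ext v
    simp only [Set.mem_image, Set.mem_range, LinearEquiv.coe_coe]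
    constructor
    · rintro ⟨_, ⟨k, rfl⟩, rfl⟩
      exact ⟨k + 1, (hs'g k).symm⟩
    · rintro ⟨k, rfl⟩
      exact ⟨g f (k - 1), ⟨k - 1, rfl⟩, by rw [hs'g, show k - 1 + 1 = k by omega]⟩
  set φ : ↥N ≃ₗ[R'] ↥N := (s'.submoduleMap N).trans (LinearEquiv.ofEq _ _ heqN) with hφ
  have hφcoe : ∀ x : ↥N, (↑(φ x) : V R) = s' ↑x := by
    intro x
    simp [hφ, LinearEquiv.submoduleMap_apply]
  have hφscoe : ∀ x : ↥N, (↑(φ.symm x) : V R) = s'.symm ↑x := by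
    intro x
    have h1 := hφcoe (φ.symm x)
    rw [LinearEquiv.apply_symm_apply] at h1
    rw [h1, LinearEquiv.symm_apply_apply]
  set xe : ℤ → ↥N := fun k => ⟨g f k, hgN k⟩ with hxe
  have hφx : ∀ k : ℤ, φ.toLinearMap (xe k) = xe (k + 1) := by
    intro k
    apply Subtype.ext
    show ((φ (xe k) : ↥N) : V R) = g f (k + 1)
    rw [hφcoe]
    exact hs'g k
  have hφsx : ∀ k : ℤ, φ.symm.toLinearMap (xe k) = xe (k - 1) := by
    intro k
    apply Subtype.ext
    show ((φ.symm (xe k) : ↥N) : V R) = g f (k - 1)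
    rw [hφscoe]
    exact hs'gs k
  have hpow : ∀ (j : ℕ) (k : ℤ), (φ.toLinearMap ^ j) (xe k) = xe (k + j) := by
    intro j
    induction j with
    | zero =>
      intro k
      rw [pow_zero, Module.End.one_apply]
      apply Subtype.ext
      show g f k = g f (k + ((0 : ℕ) : ℤ))
      congr 1
      omega
    | succ j ih =>
      intro k
      rw [pow_succ', Module.End.mul_apply, ih, hφx]
      apply Subtype.ext
      show g f (k + (j : ℤ) + 1) = g f (k + ((j + 1 : ℕ) : ℤ))
      congr 1
      omega
  have hpows : ∀ (j : ℕ) (k : ℤ), (φ.symm.toLinearMap ^ j) (xe k) = xe (k - j) := by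
    intro j
    induction j with
    | zero =>
      intro k
      rw [pow_zero, Module.End.one_apply]
      apply Subtype.ext
      show g f k = g f (k - ((0 : ℕ) : ℤ))
      congr 1
      omega
    | succ j ih =>
      intro k
      rw [pow_succ', Module.End.mul_apply, ih, hφsx]
      apply Subtype.ext
      show g f (k - (j : ℤ) - 1) = g f (k - ((j + 1 : ℕ) : ℤ))
      congr 1
      omega
  haveI : Module.Finite R' ↥N := Module.Finite.iff_fg.2 hNfg
  obtain ⟨p, hpm, hp0⟩ := LinearMap.exists_monic_and_aeval_eq_zero (R := R') φ.toLinearMap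
  obtain ⟨q, hqm, hq0⟩ := LinearMap.exists_monic_and_aeval_eq_zero (R := R') φ.symm.toLinearMap
  have hA : ∑ j ∈ Finset.range (p.natDegree + 1),
      ((p.coeff j : R)) • g f (j : ℤ) = 0 := by
    have h1 : (Polynomial.aeval φ.toLinearMap p) (xe 0) = 0 := by
      rw [hp0]
      exact LinearMap.zero_apply _
    rw [Polynomial.aeval_endomorphism] at h1
    rw [Polynomial.sum_over_range (p := p)
      (f := fun (j : ℕ) (b : ↥R') => (b • ((φ.toLinearMap ^ j) (xe 0)) : ↥N))
      (fun _ => zero_smul _ _)] at h1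
    have h2 : ∑ j ∈ Finset.range (p.natDegree + 1), p.coeff j • xe ((j : ℤ)) = (0 : ↥N) := by
      rw [← h1]
      refine Finset.sum_congr rfl fun j _ => ?_
      rw [hpow j 0]
      congr 1
      apply Subtype.ext
      show g f ((j : ℤ)) = g f (0 + (j : ℤ))
      congr 1
      omega
    have h3 := congrArg (N.subtype) h2
    rw [map_sum, map_zero] at h3
    exact h3
  have hAfin := mk_relation f p.natDegree (fun j => (p.coeff j : R)) hA
  have hB0 : ∑ j ∈ Finset.range (q.natDegree + 1),
      ((q.coeff j : R)) • g f ((q.natDegree : ℤ) - j) = 0 := by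
    have h1 : (Polynomial.aeval φ.symm.toLinearMap q) (xe (q.natDegree : ℤ)) = 0 := by
      rw [hq0]
      exact LinearMap.zero_apply _
    rw [Polynomial.aeval_endomorphism] at h1
    rw [Polynomial.sum_over_range (p := q)
      (f := fun (j : ℕ) (b : ↥R') => (b • ((φ.symm.toLinearMap ^ j) (xe (q.natDegree : ℤ))) : ↥N))
      (fun _ => zero_smul _ _)] at h1
    have h2 : ∑ j ∈ Finset.range (q.natDegree + 1),
        q.coeff j • xe ((q.natDegree : ℤ) - j) = (0 : ↥N) := by
      rw [← h1]
      refine Finset.sum_congr rfl fun j _ => ?_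
      rw [hpows j]
    have h3 := congrArg (N.subtype) h2
    rw [map_sum, map_zero] at h3
    exact h3
  have hB : ∑ j ∈ Finset.range (q.natDegree + 1),
      ((q.coeff (q.natDegree - j) : R)) • g f (j : ℤ) = 0 := by
    have h4 : (∑ j ∈ Finset.range (q.natDegree + 1),
        ((q.coeff (q.natDegree - j) : R)) • g f (j : ℤ))
        = ∑ j ∈ Finset.range (q.natDegree + 1),
          ((q.coeff j : R)) • g f ((q.natDegree : ℤ) - (j : ℤ)) := by
      rw [← Finset.sum_range_reflect
        (fun j => ((q.coeff j : R)) • g f ((q.natDegree : ℤ) - (j : ℤ))) (q.natDegree + 1)]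
      refine Finset.sum_congr rfl fun j hj => ?_
      rw [Finset.mem_range] at hj
      have e1 : q.natDegree + 1 - 1 - j = q.natDegree - j := by omega
      rw [e1, show ((j : ℕ) : ℤ) = (q.natDegree : ℤ) - ((q.natDegree - j : ℕ) : ℤ) by omega]
    rw [h4, hB0]
  have hBfin := mk_relation f q.natDegree (fun j => (q.coeff (q.natDegree - j) : R)) hB
  refine exists_Q' R' f hf p.natDegree _ (fun j => SetLike.coe_mem _) ?_ hAfin
    q.natDegree _ (fun j => SetLike.coe_mem _) ?_ hBfin
  · rw [hpm.coeff_natDegree]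
    rfl
  · rw [Nat.sub_zero, hqm.coeff_natDegree]
    rfl
end

section
/- Let $R$ be a commutative ring, $d \geq 1$ an integer, and $f \in R((X))$ a formal Laurent series. Suppose that in the $R[X,X^{-1}]$-module $R((X))/R[X,X^{-1}]$, the classes of $X^{-1}f$ and $X^d f$ both lie in the $R$-submodule spanned by the classes of $f, Xf, \dots, X^{d-1}f$. Then there exists a Laurent polynomial $T \in R[X,X^{-1}]$ of the form $T = X^{-1} + (\text{terms of degrees } 0 \text{ through } d-1) + X^d$ (so with leading and trailing coefficients equal to $1$) such that $Tf \in R[X,X^{-1}]$. -/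
/-- Let `f ∈ R((X))` and `d ≥ 1`.  If, modulo Laurent polynomials, both `X⁻¹·f` and
`X^d·f` are `R`-linear combinations of `f, X·f, …, X^{d-1}·f`, then there is a
Laurent polynomial `T = X⁻¹ + (terms of degrees 0 through d-1) + X^d` (whose leading
and trailing coefficients are thus `1`) such that `T·f` is a Laurent polynomial. -/
theorem exists_T_of_recurrences
    (R : Type*) [CommRing R] (d : ℕ) (hd : 1 ≤ d) (f : LaurentSeries R)
    (p q : Fin d → R)
    (h1 : ((HahnSeries.single (-1 : ℤ) (1 : R)) * f
        - ∑ i, p i • (HahnSeries.single (i : ℤ) (1 : R) * f)).support.Finite)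
    (h2 : ((HahnSeries.single (d : ℤ) (1 : R)) * f
        - ∑ i, q i • (HahnSeries.single (i : ℤ) (1 : R) * f)).support.Finite) :
    ∃ t : Fin d → R,
      (((HahnSeries.single (-1 : ℤ) (1 : R))
        + (∑ i : Fin d, HahnSeries.single ((i : ℤ)) (t i))
        + HahnSeries.single (d : ℤ) (1 : R)) * f).support.Finite := by
  refine ⟨fun i => -(p i + q i), ?_⟩
  have hs : ∀ (i : Fin d) (c : R), HahnSeries.single ((i : ℤ)) c * f
      = c • (HahnSeries.single ((i : ℤ)) (1 : R) * f) := by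
    intro i c
    rw [← HahnSeries.C_mul_eq_smul, ← mul_assoc]
    congr 1
    rw [HahnSeries.C_apply, HahnSeries.single_mul_single, zero_add, mul_one]
  have key : (((HahnSeries.single (-1 : ℤ) (1 : R))
        + (∑ i : Fin d, HahnSeries.single ((i : ℤ)) (-(p i + q i)))
        + HahnSeries.single (d : ℤ) (1 : R)) * f)
      = ((HahnSeries.single (-1 : ℤ) (1 : R)) * f
        - ∑ i, p i • (HahnSeries.single (i : ℤ) (1 : R) * f))
      + ((HahnSeries.single (d : ℤ) (1 : R)) * f
        - ∑ i, q i • (HahnSeries.single (i : ℤ) (1 : R) * f)) := by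
    simp only [add_mul, Finset.sum_mul]
    rw [Finset.sum_congr rfl (fun i _ => by
      rw [hs i, neg_add, add_smul, neg_smul, neg_smul])]
    rw [Finset.sum_add_distrib, Finset.sum_neg_distrib, Finset.sum_neg_distrib]
    abel
  rw [key]
  exact (h1.union h2).subset (HahnSeries.support_add_subset _ _)
end
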